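/- For every steplength γ > 0 and every j ≥ 0, the AsyRK iterates satisfy 𝔼⟨ x_{k(j)} − x_j , θ_{i_j} P_{t_j} a_{i_j} (a_{i_j}ᵀ x_{k(j)} − b_{i_j}) ⟩ ≤ (γ λ_max / (2m²)) Σ_{d=k(j)}^{j−1} [ 𝔼(‖Ax_{k(d)} − b‖²) + 𝔼(‖Ax_{k(j)} − b‖²) ]. -/

import Mathlib

open MeasureTheory ProbabilityTheory Matrix Finset
open scoped Classical

/-- dot product identity: `u ⬝ (AᵀA v) = (A u) ⬝ (A v)`. -/
lemma aux_dot_id {m n : ℕ} (A : Matrix (Fin m) (Fin n) ℝ) (u v : Fin n → ℝ) :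
    ∑ s, u s * (Aᵀ * A).mulVec v s = ∑ i, A.mulVec u i * A.mulVec v i := by
  calc ∑ s, u s * (Aᵀ * A).mulVec v s
      = u ⬝ᵥ ((Aᵀ * A) *ᵥ v) := rfl
    _ = (u ᵥ* (Aᵀ * A)) ⬝ᵥ v := Matrix.dotProduct_mulVec u (Aᵀ * A) v
    _ = ((u ᵥ* Aᵀ) ᵥ* A) ⬝ᵥ v := by rw [Matrix.vecMul_vecMul]
    _ = ((A *ᵥ u) ᵥ* A) ⬝ᵥ v := by rw [Matrix.vecMul_transpose]
    _ = (A *ᵥ u) ⬝ᵥ (A *ᵥ v) := (Matrix.dotProduct_mulVec _ A v).symm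
    _ = ∑ i, A.mulVec u i * A.mulVec v i := rfl

lemma aux_lam_nonneg {m n : ℕ} (A : Matrix (Fin m) (Fin n) ℝ) (lam : ℝ)
    (h : IsGreatest {c : ℝ | ∃ v : Fin n → ℝ, v ≠ 0 ∧ (Aᵀ * A).mulVec v = c • v} lam) :
    0 ≤ lam := by
  obtain ⟨v, hv0, hv⟩ := h.1
  have hpos : 0 < ∑ s, v s * v s := by
    have : ∃ s, v s ≠ 0 := by
      by_contra hc
      push_neg at hc
      exact hv0 (funext hc)
    obtain ⟨s, hs⟩ := this
    apply Finset.sum_pos' (fun i _ => mul_self_nonneg _)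
    exact ⟨s, Finset.mem_univ s, mul_self_pos.mpr hs⟩
  have h1 : ∑ i, A.mulVec v i * A.mulVec v i = lam * ∑ s, v s * v s := by
    rw [← aux_dot_id A v v, hv, Finset.mul_sum]
    apply Finset.sum_congr rfl
    intro s _
    simp [smul_eq_mul]
    ring
  nlinarith [Finset.sum_nonneg (fun i (_ : i ∈ Finset.univ) => mul_self_nonneg (A.mulVec v i))]

/-- Rayleigh quotient bound for `AᵀA`. -/
lemma aux_rayleigh {m n : ℕ} (A : Matrix (Fin m) (Fin n) ℝ) (lam : ℝ)
    (h : IsGreatest {c : ℝ | ∃ v : Fin n → ℝ, v ≠ 0 ∧ (Aᵀ * A).mulVec v = c • v} lam)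
    (u : Fin n → ℝ) :
    ∑ i, A.mulVec u i * A.mulVec u i ≤ lam * ∑ s, u s * u s := by
  classical
  set M := Aᵀ * A with hMdef
  have hM : M.IsHermitian := by have := Matrix.isHermitian_conjTranspose_mul_self A; rwa [Matrix.conjTranspose_eq_transpose_of_trivial] at this
  set B := hM.eigenvectorBasis with hB
  set lamv := hM.eigenvalues with hlamv
  have heig : ∀ i, M.mulVec (B i) = lamv i • (B i : EuclideanSpace ℝ (Fin n)) := by
    intro i
    exact hM.mulVec_eigenvectorBasis i
  have hle : ∀ i, lamv i ≤ lam := by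
    intro i
    apply h.2
    refine ⟨B i, ?_, heig i⟩
    have := B.orthonormal.ne_zero i
    intro hc
    apply this
    ext s
    exact congrFun hc s
  set c : Fin n → ℝ := fun i => inner ℝ (B i) (WithLp.toLp 2 u) with hc
  have hinner : ∀ x y : EuclideanSpace ℝ (Fin n), (inner ℝ x y : ℝ) = ∑ s, x s * y s := by
    intro x y
    simp [PiLp.inner_apply, RCLike.inner_apply, mul_comm]
  have hu : ∑ i, c i • (B i : EuclideanSpace ℝ (Fin n)) = u := by
    have := congrArg WithLp.ofLp (B.sum_repr (WithLp.toLp 2 u))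
    simpa [hc, B.repr_apply_apply] using this
  have claim2 : ∑ s, u s * u s = ∑ i, c i * c i := by
    have hp := B.sum_inner_mul_inner (WithLp.toLp 2 u) (WithLp.toLp 2 u)
    rw [show ∑ s, u s * u s = inner ℝ (WithLp.toLp 2 u) (WithLp.toLp 2 u) from (hinner _ _).symm, ← hp]
    apply Finset.sum_congr rfl
    intro i _
    rw [hc]
    rw [real_inner_comm (B i) (WithLp.toLp 2 u)]
  have hMu : M.mulVec u = ∑ i, (c i * lamv i) • (B i : EuclideanSpace ℝ (Fin n)) := by
    conv_lhs => rw [← hu]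
    simp only [WithLp.ofLp_sum, WithLp.ofLp_smul]
    have : M.mulVec (∑ i, c i • (B i : EuclideanSpace ℝ (Fin n)))
        = ∑ i, c i • M.mulVec (B i) := by
      rw [show M.mulVec (∑ i, c i • (B i : EuclideanSpace ℝ (Fin n)))
          = M.mulVecLin (∑ i, c i • (B i : EuclideanSpace ℝ (Fin n))) from rfl]
      rw [map_sum]
      apply Finset.sum_congr rfl
      intro i _
      simp [Matrix.mulVecLin_apply]
    rw [this]
    apply Finset.sum_congr rfl
    intro i _
    rw [heig i, smul_smul]
  have claim1 : ∑ i, A.mulVec u i * A.mulVec u i = ∑ i, lamv i * (c i * c i) := by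
    rw [← aux_dot_id A u u, hMu]
    have : ∀ s, (∑ i, (c i * lamv i) • (B i : EuclideanSpace ℝ (Fin n))) s
        = ∑ i, c i * lamv i * (B i : EuclideanSpace ℝ (Fin n)) s := by
      intro s
      rw [WithLp.ofLp_sum, Finset.sum_apply]
      rfl
    calc ∑ s, u s * (∑ i, (c i * lamv i) • (B i : EuclideanSpace ℝ (Fin n))) s
        = ∑ s, ∑ i, c i * lamv i * (u s * (B i : EuclideanSpace ℝ (Fin n)) s) := by
          apply Finset.sum_congr rfl; intro s _; rw [this s, Finset.mul_sum]
          apply Finset.sum_congr rfl; intro i _; ring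
      _ = ∑ i, ∑ s, c i * lamv i * (u s * (B i : EuclideanSpace ℝ (Fin n)) s) :=
          Finset.sum_comm
      _ = ∑ i, c i * lamv i * inner ℝ (B i) (WithLp.toLp 2 u) := by
          apply Finset.sum_congr rfl; intro i _
          rw [hinner (B i) (WithLp.toLp 2 u), WithLp.ofLp_toLp, Finset.mul_sum]
          apply Finset.sum_congr rfl; intro s _; ring
      _ = ∑ i, lamv i * (c i * c i) := by
          apply Finset.sum_congr rfl; intro i _
          rw [show inner ℝ (B i) (WithLp.toLp 2 u) = c i from rfl]; ring
  rw [claim1, claim2, Finset.mul_sum]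
  apply Finset.sum_le_sum
  intro i _
  have := hle i
  nlinarith [mul_self_nonneg (c i)]

/-- Deterministic version of the AsyRK recursion, as a function of the sample path. -/
noncomputable def asyChi {m n : ℕ} (A : Matrix (Fin m) (Fin n) ℝ) (b : Fin m → ℝ)
    (θ : Fin m → ℕ) (γ : ℝ) (k : ℕ → ℕ) (x0 : Fin n → ℝ) :
    ℕ → (ℕ → Fin m × Fin n) → Fin n → ℝ
  | 0, _ => x0
  | (t+1), v => fun s =>
      asyChi A b θ γ k x0 t v s -
      (if s = (v t).2 then
        γ * (θ (v t).1 : ℝ) * A (v t).1 (v t).2 *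
          ((∑ t', A (v t).1 t' * asyChi A b θ γ k x0 (min (k t) t) v t') - b (v t).1)
       else 0)
  termination_by t => t
  decreasing_by all_goals omega

lemma asyChi_congr {m n : ℕ} (A : Matrix (Fin m) (Fin n) ℝ) (b : Fin m → ℝ)
    (θ : Fin m → ℕ) (γ : ℝ) (k : ℕ → ℕ) (x0 : Fin n → ℝ) :
    ∀ t (v v' : ℕ → Fin m × Fin n), (∀ i, i < t → v i = v' i) →
      asyChi A b θ γ k x0 t v = asyChi A b θ γ k x0 t v' := by
  intro t
  induction t using Nat.strong_induction_on with
  | _ t ih =>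
    match t with
    | 0 => intro v v' _; simp [asyChi]
    | (t+1) =>
      intro v v' hvv
      have h1 : asyChi A b θ γ k x0 t v = asyChi A b θ γ k x0 t v' :=
        ih t (by omega) v v' (fun i hi => hvv i (by omega))
      have h2 : asyChi A b θ γ k x0 (min (k t) t) v
          = asyChi A b θ γ k x0 (min (k t) t) v' :=
        ih (min (k t) t) (by omega) v v' (fun i hi => hvv i (by omega))
      funext s
      simp only [asyChi]
      rw [h1, h2, hvv t (by omega)]

/-- "Integrating out" one coordinate of a product-weighted sum. -/
lemma aux_peel {ι E' : Type*} [Fintype ι] [DecidableEq ι] [Fintype E']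
    (w : E' → ℝ) (hw : ∑ p, w p = 1) (c : ι) (Φ : E' → (ι → E') → ℝ)
    (hΦ : ∀ p v q, Φ p (Function.update v c q) = Φ p v) :
    ∑ v : ι → E', (∏ i, w (v i)) * Φ (v c) v
      = ∑ v : ι → E', (∏ i, w (v i)) * ∑ p, w p * Φ p v := by
  classical
  have key : ∑ vp : (ι → E') × E',
        (∏ i, w (vp.1 i)) * (w vp.2 * Φ (vp.1 c) vp.1)
      = ∑ vp : (ι → E') × E',
        (∏ i, w (vp.1 i)) * (w vp.2 * Φ vp.2 vp.1) := by
    let e : (ι → E') × E' ≃ (ι → E') × E' :=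
      { toFun := fun vp => (Function.update vp.1 c vp.2, vp.1 c)
        invFun := fun vp => (Function.update vp.1 c vp.2, vp.1 c)
        left_inv := by
          intro vp
          simp [Function.update_idem, Function.update_eq_self]
        right_inv := by
          intro vp
          simp [Function.update_idem, Function.update_eq_self] }
    rw [← Equiv.sum_comp e (fun vp : (ι → E') × E' =>
      (∏ i, w (vp.1 i)) * (w vp.2 * Φ vp.2 vp.1))]
    apply Finset.sum_congr rfl
    rintro ⟨v, p⟩ _
    have hprod : ∏ i, w (Function.update v c p i) = w p * ∏ i ∈ Finset.univ.erase c, w (v i) := by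
      rw [show (fun i => w (Function.update v c p i)) = Function.update (fun i => w (v i)) c (w p)
        by funext i
           by_cases h : i = c
           · subst h; simp
           · simp [Function.update_of_ne h]]
      rw [Finset.prod_update_of_mem (Finset.mem_univ c)]
      rw [Finset.sdiff_singleton_eq_erase]
    have hprod2 : ∏ i, w (v i) = w (v c) * ∏ i ∈ Finset.univ.erase c, w (v i) :=
      (Finset.mul_prod_erase Finset.univ _ (Finset.mem_univ c)).symm
    simp only [e, Equiv.coe_fn_mk]
    rw [hΦ, hprod, hprod2]
    ring
  calc ∑ v : ι → E', (∏ i, w (v i)) * Φ (v c) v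
      = ∑ v : ι → E', (∏ i, w (v i)) * Φ (v c) v * ∑ p, w p := by
        simp [hw]
    _ = ∑ vp : (ι → E') × E', (∏ i, w (vp.1 i)) * (w vp.2 * Φ (vp.1 c) vp.1) := by
        rw [Fintype.sum_prod_type]
        apply Finset.sum_congr rfl
        intro v _
        rw [Finset.mul_sum]
        apply Finset.sum_congr rfl
        intro p _
        ring
    _ = ∑ vp : (ι → E') × E', (∏ i, w (vp.1 i)) * (w vp.2 * Φ vp.2 vp.1) := key
    _ = ∑ v : ι → E', (∏ i, w (v i)) * ∑ p, w p * Φ p v := by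
        rw [Fintype.sum_prod_type]
        apply Finset.sum_congr rfl
        intro v _
        rw [Finset.mul_sum]

/-- Expectation of a function of finitely many i.i.d.-style discrete random variables
as a weighted finite sum. -/
lemma aux_int_eq_sum {Ω : Type*} [MeasurableSpace Ω] (P : Measure Ω) [IsProbabilityMeasure P]
    {E' : Type*} [Fintype E'] [MeasurableSpace E'] [MeasurableSingletonClass E']
    (Z : ℕ → Ω → E') (hZmeas : ∀ i, Measurable (Z i))
    (hind : iIndepFun Z P)
    (ν : E' → ENNReal) (hdist : ∀ i p, P {ω | Z i ω = p} = ν p)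
    (T : ℕ) (F : (Fin T → E') → ℝ) :
    ∫ ω, F (fun i => Z i.1 ω) ∂P
      = ∑ v : Fin T → E', (∏ i, (ν (v i)).toReal) * F v := by
  classical
  set V : Ω → (Fin T → E') := fun ω i => Z i.1 ω with hV
  have hVmeas : Measurable V :=
    measurable_pi_lambda _ (fun i => hZmeas i.1)
  have hmap : IsProbabilityMeasure (P.map V) := Measure.isProbabilityMeasure_map hVmeas.aemeasurable
  have hFmeas : Measurable F := measurable_of_countable F
  rw [show (∫ ω, F (fun i => Z i.1 ω) ∂P) = ∫ y, F y ∂(P.map V) from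
    (integral_map hVmeas.aemeasurable hFmeas.aestronglyMeasurable).symm]
  rw [integral_fintype (Integrable.of_finite)]
  apply Finset.sum_congr rfl
  intro v _
  have hatom : (P.map V) {v} = ∏ i, ν (v i) := by
    rw [Measure.map_apply hVmeas (MeasurableSet.singleton v)]
    have hpre : V ⁻¹' {v} = ⋂ i ∈ Finset.range T, Z i ⁻¹'
        (if h : i < T then {v ⟨i, h⟩} else Set.univ) := by
      ext ω
      simp only [Set.mem_preimage, Set.mem_singleton_iff, Set.mem_iInter, Finset.mem_range]
      constructor
      · intro hω i hi
        rw [dif_pos hi]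
        simp only [Set.mem_preimage, Set.mem_singleton_iff]
        exact congrFun hω ⟨i, hi⟩
      · intro hω
        funext i
        have := hω i.1 i.2
        rw [dif_pos i.2] at this
        simpa using this
    rw [hpre]
    rw [hind.measure_inter_preimage_eq_mul (Finset.range T)
      (sets := fun i => if h : i < T then {v ⟨i, h⟩} else Set.univ)
      (fun i _ => by by_cases h : i < T <;> simp [h])]
    rw [← Fin.prod_univ_eq_prod_range (fun i => P (Z i ⁻¹'
        (if h : i < T then {v ⟨i, h⟩} else Set.univ))) T]
    apply Finset.prod_congr rfl
    intro i _
    rw [dif_pos i.2]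
    rw [← hdist i.1 (v i)]
    rfl
  rw [measureReal_def, hatom, ENNReal.toReal_prod, smul_eq_mul]

lemma aux_theta_ne {m n : ℕ} (A : Matrix (Fin m) (Fin n) ℝ) (θ : Fin m → ℕ)
    (hθ : ∀ i, θ i = (Finset.univ.filter (fun t => A i t ≠ 0)).card)
    {i : Fin m} {s : Fin n} (his : A i s ≠ 0) : (θ i : ℝ) ≠ 0 := by
  have : 0 < (Finset.univ.filter (fun t => A i t ≠ 0)).card :=
    Finset.card_pos.mpr ⟨s, Finset.mem_filter.mpr ⟨Finset.mem_univ s, his⟩⟩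
  rw [hθ i]
  exact Nat.cast_ne_zero.mpr (by omega)

lemma aux_w_sum_one {m n : ℕ} (hm : 0 < m) (A : Matrix (Fin m) (Fin n) ℝ) (θ : Fin m → ℕ)
    (hrows : ∀ i, ∑ t, (A i t) ^ 2 = 1)
    (hθ : ∀ i, θ i = (Finset.univ.filter (fun t => A i t ≠ 0)).card) :
    ∑ p : Fin m × Fin n, (if A p.1 p.2 ≠ 0 then ((m : ℝ) * (θ p.1 : ℝ))⁻¹ else 0) = 1 := by
  classical
  rw [Fintype.sum_prod_type]
  have hrow : ∀ i : Fin m, ∑ t, (if A i t ≠ 0 then ((m : ℝ) * (θ i : ℝ))⁻¹ else 0)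
      = (m : ℝ)⁻¹ := by
    intro i
    have hex : ∃ t, A i t ≠ 0 := by
      by_contra hc
      push_neg at hc
      have := hrows i
      rw [Finset.sum_eq_zero (fun t _ => by rw [hc t]; ring)] at this
      norm_num at this
    obtain ⟨t0, ht0⟩ := hex
    have hθne : (θ i : ℝ) ≠ 0 := aux_theta_ne A θ hθ ht0
    rw [← Finset.sum_filter]
    rw [Finset.sum_const]
    rw [← hθ i]
    rw [nsmul_eq_mul]
    rw [mul_inv]
    field_simp
  rw [Finset.sum_congr rfl (fun i _ => hrow i)]
  rw [Finset.sum_const]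
  rw [nsmul_eq_mul]
  rw [Finset.card_univ, Fintype.card_fin]
  field_simp

lemma aux_L1 {m n : ℕ} (A : Matrix (Fin m) (Fin n) ℝ) (b : Fin m → ℝ) (θ : Fin m → ℕ)
    (hθ : ∀ i, θ i = (Finset.univ.filter (fun t => A i t ≠ 0)).card)
    (y : Fin n → ℝ) (s : Fin n) :
    ∑ p : Fin m × Fin n, (if A p.1 p.2 ≠ 0 then ((m : ℝ) * (θ p.1 : ℝ))⁻¹ else 0) *
        (if s = p.2 then (θ p.1 : ℝ) * A p.1 p.2 * ((∑ t, A p.1 t * y t) - b p.1) else 0)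
      = (m : ℝ)⁻¹ * ∑ i, A i s * ((∑ t, A i t * y t) - b i) := by
  classical
  rw [Fintype.sum_prod_type]
  rw [Finset.mul_sum]
  apply Finset.sum_congr rfl
  intro i _
  have hterm : ∀ t : Fin n,
      (if A i t ≠ 0 then ((m : ℝ) * (θ i : ℝ))⁻¹ else 0) *
        (if s = t then (θ i : ℝ) * A i t * ((∑ t', A i t' * y t') - b i) else 0)
      = if s = t then (if A i t ≠ 0 then ((m : ℝ) * (θ i : ℝ))⁻¹ else 0) *
          ((θ i : ℝ) * A i t * ((∑ t', A i t' * y t') - b i)) else 0 := by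
    intro t
    by_cases h : s = t <;> simp [h]
  rw [Finset.sum_congr rfl (fun t _ => hterm t)]
  rw [Finset.sum_ite_eq univ s]
  simp only [Finset.mem_univ, if_true]
  by_cases h : A i s ≠ 0
  · rw [if_pos h]
    have hθne : (θ i : ℝ) ≠ 0 := aux_theta_ne A θ hθ h
    have hmne : (m : ℝ) ≠ 0 := by
      have : 0 < m := Fin.pos i
      exact Nat.cast_ne_zero.mpr (by omega)
    field_simp
  · rw [if_neg h]
    push_neg at h
    rw [h]
    ring

lemma aux_AT {m n : ℕ} (A : Matrix (Fin m) (Fin n) ℝ) (lam : ℝ)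
    (hlam : IsGreatest {c : ℝ | ∃ v : Fin n → ℝ, v ≠ 0 ∧ (Aᵀ * A).mulVec v = c • v} lam)
    (u : Fin m → ℝ) :
    ∑ s, (∑ i, A i s * u i) * (∑ i, A i s * u i) ≤ lam * ∑ i, u i * u i := by
  classical
  set q : Fin n → ℝ := fun s => ∑ i, A i s * u i with hq
  have hmv : ∀ (y : Fin n → ℝ) (i : Fin m), A.mulVec y i = ∑ t, A i t * y t := by
    intro y i
    simp [Matrix.mulVec, dotProduct]
  have h1 : ∑ s, q s * q s = ∑ i, u i * A.mulVec q i := by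
    calc ∑ s, q s * q s = ∑ s, ∑ i, A i s * u i * q s := by
          apply Finset.sum_congr rfl
          intro s _
          rw [show q s = ∑ i, A i s * u i from rfl, Finset.sum_mul]
      _ = ∑ i, ∑ s, A i s * u i * q s := Finset.sum_comm
      _ = ∑ i, u i * A.mulVec q i := by
          apply Finset.sum_congr rfl
          intro i _
          rw [hmv q i, Finset.mul_sum]
          apply Finset.sum_congr rfl
          intro s _
          ring
  have h2 : (∑ i, u i * A.mulVec q i) ^ 2
      ≤ (∑ i, u i ^ 2) * ∑ i, A.mulVec q i ^ 2 :=
    Finset.sum_mul_sq_le_sq_mul_sq Finset.univ _ _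
  have h3 : ∑ i, A.mulVec q i * A.mulVec q i ≤ lam * ∑ s, q s * q s :=
    aux_rayleigh A lam hlam q
  have hU : (0:ℝ) ≤ ∑ i, u i * u i :=
    Finset.sum_nonneg fun i _ => mul_self_nonneg _
  have hQ : (0:ℝ) ≤ ∑ s, q s * q s :=
    Finset.sum_nonneg fun s _ => mul_self_nonneg _
  have hlam0 : 0 ≤ lam := aux_lam_nonneg A lam hlam
  have hsq : ∀ (f : Fin m → ℝ), ∑ i, f i ^ 2 = ∑ i, f i * f i := by
    intro f
    apply Finset.sum_congr rfl
    intro i _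
    ring
  rw [hsq, hsq] at h2
  nlinarith [h1, h2, h3, hU, hQ, hlam0, mul_nonneg hlam0 hU]

lemma aux_h_bound {m n : ℕ} (hm : 0 < m) (A : Matrix (Fin m) (Fin n) ℝ) (b : Fin m → ℝ)
    (lam : ℝ)
    (hlam : IsGreatest {c : ℝ | ∃ v : Fin n → ℝ, v ≠ 0 ∧ (Aᵀ * A).mulVec v = c • v} lam)
    (y z : Fin n → ℝ) :
    ∑ s, ((m : ℝ)⁻¹ * ∑ i, A i s * ((∑ t, A i t * y t) - b i)) *
        ((m : ℝ)⁻¹ * ∑ i, A i s * ((∑ t, A i t * z t) - b i))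
      ≤ lam / (2 * (m : ℝ) ^ 2) *
        ((∑ s, (A.mulVec y s - b s) ^ 2) + (∑ s, (A.mulVec z s - b s) ^ 2)) := by
  classical
  have hmv : ∀ (y : Fin n → ℝ) (i : Fin m), A.mulVec y i = ∑ t, A i t * y t := by
    intro y i
    simp [Matrix.mulVec, dotProduct]
  set uy : Fin m → ℝ := fun i => (∑ t, A i t * y t) - b i with huy
  set uz : Fin m → ℝ := fun i => (∑ t, A i t * z t) - b i with huz
  set qy : Fin n → ℝ := fun s => ∑ i, A i s * uy i with hqy
  set qz : Fin n → ℝ := fun s => ∑ i, A i s * uz i with hqz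
  have hmne : (m : ℝ) ≠ 0 := Nat.cast_ne_zero.mpr (by omega)
  have step1 : ∑ s, ((m : ℝ)⁻¹ * qy s) * ((m : ℝ)⁻¹ * qz s)
      = ((m : ℝ)^2)⁻¹ * ∑ s, qy s * qz s := by
    rw [Finset.mul_sum]
    apply Finset.sum_congr rfl
    intro s _
    rw [pow_two, mul_inv]
    ring
  have step2 : ∑ s, qy s * qz s ≤ (1/2) * ((∑ s, qy s * qy s) + ∑ s, qz s * qz s) := by
    have := Finset.sum_le_sum (s := (Finset.univ : Finset (Fin n)))
      (f := fun s => qy s * qz s)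
      (g := fun s => (1/2) * (qy s * qy s + qz s * qz s))
      (fun s _ => by nlinarith [sq_nonneg (qy s - qz s)])
    calc ∑ s, qy s * qz s ≤ ∑ s, (1/2) * (qy s * qy s + qz s * qz s) := this
      _ = (1/2) * ((∑ s, qy s * qy s) + ∑ s, qz s * qz s) := by
          rw [← Finset.sum_add_distrib, Finset.mul_sum]
  have hy := aux_AT A lam hlam uy
  have hz := aux_AT A lam hlam uz
  have hRyeq : ∑ i, uy i * uy i = ∑ s, (A.mulVec y s - b s) ^ 2 := by
    apply Finset.sum_congr rfl
    intro i _
    rw [hmv y i]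
    ring
  have hRzeq : ∑ i, uz i * uz i = ∑ s, (A.mulVec z s - b s) ^ 2 := by
    apply Finset.sum_congr rfl
    intro i _
    rw [hmv z i]
    ring
  calc ∑ s, ((m : ℝ)⁻¹ * qy s) * ((m : ℝ)⁻¹ * qz s)
      = ((m : ℝ)^2)⁻¹ * ∑ s, qy s * qz s := step1
    _ ≤ ((m : ℝ)^2)⁻¹ * ((1/2) * ((∑ s, qy s * qy s) + ∑ s, qz s * qz s)) :=
        mul_le_mul_of_nonneg_left step2 (by positivity)
    _ ≤ ((m : ℝ)^2)⁻¹ * ((1/2) * (lam * (∑ i, uy i * uy i) + lam * (∑ i, uz i * uz i))) := by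
        apply mul_le_mul_of_nonneg_left _ (by positivity)
        have h2' : ∑ s, qz s * qz s ≤ lam * ∑ i, uz i * uz i := hz
        have h1' : ∑ s, qy s * qy s ≤ lam * ∑ i, uy i * uy i := hy
        linarith
    _ = lam / (2 * (m : ℝ) ^ 2) *
        ((∑ s, (A.mulVec y s - b s) ^ 2) + (∑ s, (A.mulVec z s - b s) ^ 2)) := by
        rw [← hRyeq, ← hRzeq]
        field_simp

theorem stmt13
    {m n : ℕ} (hm : 0 < m) (hn : 0 < n)
    (A : Matrix (Fin m) (Fin n) ℝ) (b : Fin m → ℝ)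
    (hconsistent : ∃ z : Fin n → ℝ, A.mulVec z = b)
    (hrows : ∀ i, ∑ t, (A i t) ^ 2 = 1)
    (θ : Fin m → ℕ)
    (hθ : ∀ i, θ i = (Finset.univ.filter (fun t => A i t ≠ 0)).card)
    (lammax : ℝ)
    (hlammax : IsGreatest
      {c : ℝ | ∃ v : Fin n → ℝ, v ≠ 0 ∧ (Aᵀ * A).mulVec v = c • v} lammax)
    (τ : ℕ) (hτ : 1 ≤ τ)
    (k : ℕ → ℕ) (hk : ∀ j, j - τ ≤ k j ∧ k j ≤ j)
    (γ : ℝ) (hγ : 0 < γ)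
    {Ω : Type*} [MeasurableSpace Ω] (P : Measure Ω) [IsProbabilityMeasure P]
    (Z : ℕ → Ω → Fin m × Fin n)
    (hZmeas : ∀ j, Measurable (Z j))
    (hZindep : iIndepFun Z P)
    (hZdist : ∀ j (p : Fin m × Fin n),
      P {ω | Z j ω = p} =
        if A p.1 p.2 ≠ 0 then ((m : ENNReal) * (θ p.1 : ENNReal))⁻¹ else 0)
    (x0 : Fin n → ℝ)
    (x : ℕ → Ω → Fin n → ℝ)
    (hx0 : ∀ ω, x 0 ω = x0)
    (hrec : ∀ j ω s, x (j + 1) ω s = x j ω s -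
      (if s = (Z j ω).2 then
        γ * (θ (Z j ω).1 : ℝ) * A (Z j ω).1 (Z j ω).2 *
          ((∑ t, A (Z j ω).1 t * x (k j) ω t) - b (Z j ω).1)
       else 0))
    (j : ℕ) :
    (∫ ω, ∑ s, (x (k j) ω s - x j ω s) *
        (if s = (Z j ω).2 then
          (θ (Z j ω).1 : ℝ) * A (Z j ω).1 (Z j ω).2 *
            ((∑ t, A (Z j ω).1 t * x (k j) ω t) - b (Z j ω).1)
         else 0) ∂P)
      ≤ γ * lammax / (2 * m ^ 2) *
        ∑ d ∈ Finset.Ico (k j) j, ((∫ ω, ∑ s, (A.mulVec (x (k d) ω) s - b s) ^ 2 ∂P) + (∫ ω, ∑ s, (A.mulVec (x (k j) ω) s - b s) ^ 2 ∂P)) := by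
  classical
  -- weights
  set w : Fin m × Fin n → ℝ :=
    fun p => if A p.1 p.2 ≠ 0 then ((m : ℝ) * (θ p.1 : ℝ))⁻¹ else 0 with hw_def
  set ν : Fin m × Fin n → ENNReal :=
    fun p => if A p.1 p.2 ≠ 0 then ((m : ENNReal) * (θ p.1 : ENNReal))⁻¹ else 0 with hν_def
  have hν : ∀ i p, P {ω | Z i ω = p} = ν p := by
    intro i p
    rw [hν_def]
    exact hZdist i p
  have hwto : ∀ p, (ν p).toReal = w p := by
    intro p
    by_cases hp : A p.1 p.2 ≠ 0
    · rw [hν_def, hw_def]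
      simp only
      rw [if_pos hp, if_pos hp, ENNReal.toReal_inv, ENNReal.toReal_mul,
        ENNReal.toReal_natCast, ENNReal.toReal_natCast]
    · rw [hν_def, hw_def]
      simp only
      rw [if_neg hp, if_neg hp]
      simp
  have hw1 : ∑ p, w p = 1 := by
    rw [hw_def]
    exact aux_w_sum_one hm A θ hrows hθ
  have hwnn : ∀ p, 0 ≤ w p := by
    intro p
    rw [hw_def]
    dsimp only
    split <;> positivity
  -- deterministic path functions
  set p0 : Fin m × Fin n := (⟨0, hm⟩, ⟨0, hn⟩) with hp0_def
  set ext : (Fin (j+1) → Fin m × Fin n) → ℕ → Fin m × Fin n :=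
    fun v i => if h : i < j + 1 then v ⟨i, h⟩ else p0 with hext_def
  set X : ℕ → (Fin (j+1) → Fin m × Fin n) → Fin n → ℝ :=
    fun t v => asyChi A b θ γ k x0 t (ext v) with hX_def
  set W : (Fin (j+1) → Fin m × Fin n) → ℝ := fun v => ∏ i, w (v i) with hW_def
  set g : (Fin m × Fin n) → (Fin n → ℝ) → Fin n → ℝ :=
    fun p y s => if s = p.2 then (θ p.1 : ℝ) * A p.1 p.2 *
      ((∑ t, A p.1 t * y t) - b p.1) else 0 with hg_def
  set hh : (Fin n → ℝ) → Fin n → ℝ :=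
    fun y s => (m : ℝ)⁻¹ * ∑ i, A i s * ((∑ t, A i t * y t) - b i) with hh_def
  set Rf : ℕ → (Fin (j+1) → Fin m × Fin n) → ℝ :=
    fun t v => ∑ s, (A.mulVec (X t v) s - b s) ^ 2 with hRf_def
  have hWeq : ∀ v : Fin (j+1) → Fin m × Fin n, (∏ i, (ν (v i)).toReal) = W v := by
    intro v
    rw [hW_def]
    exact Finset.prod_congr rfl (fun i _ => hwto (v i))
  have hWnn : ∀ v : Fin (j+1) → Fin m × Fin n, 0 ≤ W v := by
    intro v
    rw [hW_def]
    exact Finset.prod_nonneg fun i _ => hwnn (v i)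
  -- the iterates only depend on the past draws
  have hxchi : ∀ t ω, x t ω = asyChi A b θ γ k x0 t (fun i => Z i ω) := by
    intro t
    induction t using Nat.strong_induction_on with
    | _ t ih =>
      match t with
      | 0 =>
        intro ω
        rw [hx0 ω]
        simp [asyChi]
      | (t+1) =>
        intro ω
        funext s
        rw [hrec t ω s]
        have e1 := ih t (by omega) ω
        have e2 := ih (k t) (by have := (hk t).2; omega) ω
        simp only [asyChi]
        rw [min_eq_left (hk t).2, ← e1, ← e2]
  have hXeq : ∀ t, t ≤ j → ∀ ω, x t ω = X t (fun i : Fin (j+1) => Z i.1 ω) := by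
    intro t ht ω
    rw [hxchi t ω, hX_def]
    apply asyChi_congr
    intro i hi
    rw [hext_def]
    simp only
    rw [dif_pos (show i < j + 1 by omega)]
  -- locality and update invariance
  have hXloc : ∀ (t : ℕ) (v v' : Fin (j+1) → Fin m × Fin n),
      (∀ i : Fin (j+1), i.1 < t → v i = v' i) → X t v = X t v' := by
    intro t v v' hvv
    rw [hX_def]
    apply asyChi_congr
    intro i hi
    rw [hext_def]
    simp only
    by_cases h : i < j + 1
    · rw [dif_pos h, dif_pos h]
      exact hvv ⟨i, h⟩ hi
    · rw [dif_neg h, dif_neg h]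
  have hXupd : ∀ (c : Fin (j+1)) (v : Fin (j+1) → Fin m × Fin n) q (t : ℕ), t ≤ c.1 →
      X t (Function.update v c q) = X t v := by
    intro c v q t ht
    apply hXloc
    intro i hi
    apply Function.update_of_ne
    intro hic
    rw [hic] at hi
    omega
  have hextupd : ∀ (c : Fin (j+1)) (v : Fin (j+1) → Fin m × Fin n) q (d' : ℕ), d' ≠ c.1 →
      ext (Function.update v c q) d' = ext v d' := by
    intro c v q d' hd'
    rw [hext_def]
    simp only
    by_cases h : d' < j + 1
    · rw [dif_pos h, dif_pos h]
      apply Function.update_of_ne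
      intro hc
      exact hd' (by rw [← hc])
    · rw [dif_neg h, dif_neg h]
  -- rewrite the LHS integral as a finite weighted sum
  have hLHS : (∫ ω, ∑ s, (x (k j) ω s - x j ω s) *
        (if s = (Z j ω).2 then
          (θ (Z j ω).1 : ℝ) * A (Z j ω).1 (Z j ω).2 *
            ((∑ t, A (Z j ω).1 t * x (k j) ω t) - b (Z j ω).1)
         else 0) ∂P)
      = ∑ v : Fin (j+1) → Fin m × Fin n, W v *
          (∑ s, (X (k j) v s - X j v s) * g (ext v j) (X (k j) v) s) := by
    have hZj : ∀ ω, ext (fun i : Fin (j+1) => Z i.1 ω) j = Z j ω := by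
      intro ω
      rw [hext_def]
      simp only
      rw [dif_pos (Nat.lt_succ_self j)]
    have hptw : ∀ ω, (∑ s, (x (k j) ω s - x j ω s) *
        (if s = (Z j ω).2 then
          (θ (Z j ω).1 : ℝ) * A (Z j ω).1 (Z j ω).2 *
            ((∑ t, A (Z j ω).1 t * x (k j) ω t) - b (Z j ω).1)
         else 0))
        = (fun v => ∑ s, (X (k j) v s - X j v s) * g (ext v j) (X (k j) v) s)
            (fun i : Fin (j+1) => Z i.1 ω) := by
      intro ω
      simp only
      rw [← hXeq (k j) (hk j).2 ω, ← hXeq j le_rfl ω]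
      apply Finset.sum_congr rfl
      intro s _
      congr 1
      rw [hg_def]
      simp only
      rw [hZj ω]
    rw [show (fun ω => ∑ s, (x (k j) ω s - x j ω s) *
        (if s = (Z j ω).2 then
          (θ (Z j ω).1 : ℝ) * A (Z j ω).1 (Z j ω).2 *
            ((∑ t, A (Z j ω).1 t * x (k j) ω t) - b (Z j ω).1)
         else 0))
        = (fun ω => (fun v => ∑ s, (X (k j) v s - X j v s) * g (ext v j) (X (k j) v) s)
            (fun i : Fin (j+1) => Z i.1 ω)) from funext hptw]
    rw [aux_int_eq_sum P Z hZmeas hZindep ν hν (j+1)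
      (fun v => ∑ s, (X (k j) v s - X j v s) * g (ext v j) (X (k j) v) s)]
    exact Finset.sum_congr rfl (fun v _ => by rw [hWeq v])
  -- rewrite the RHS integrals as finite weighted sums
  have hRint : ∀ t, t ≤ j → (∫ ω, ∑ s, (A.mulVec (x t ω) s - b s) ^ 2 ∂P)
      = ∑ v : Fin (j+1) → Fin m × Fin n, W v * Rf t v := by
    intro t ht
    rw [show (fun ω => ∑ s, (A.mulVec (x t ω) s - b s) ^ 2)
        = (fun ω => (fun v => Rf t v) (fun i : Fin (j+1) => Z i.1 ω))
        from funext fun ω => by rw [hRf_def]; simp only; rw [hXeq t ht ω]]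
    rw [aux_int_eq_sum P Z hZmeas hZindep ν hν (j+1) (fun v => Rf t v)]
    exact Finset.sum_congr rfl (fun v _ => by rw [hWeq v])
  have hRHSsum : ∑ d ∈ Finset.Ico (k j) j,
        ((∫ ω, ∑ s, (A.mulVec (x (k d) ω) s - b s) ^ 2 ∂P)
          + (∫ ω, ∑ s, (A.mulVec (x (k j) ω) s - b s) ^ 2 ∂P))
      = ∑ d ∈ Finset.Ico (k j) j,
        ((∑ v : Fin (j+1) → Fin m × Fin n, W v * Rf (k d) v)
          + (∑ v : Fin (j+1) → Fin m × Fin n, W v * Rf (k j) v)) := by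
    apply Finset.sum_congr rfl
    intro d hd
    have hd2 : d < j := (Finset.mem_Ico.mp hd).2
    rw [hRint (k d) (le_trans (hk d).2 (by omega)), hRint (k j) (hk j).2]
  rw [hLHS, hRHSsum]
  -- one-step recursion for X
  have hstep : ∀ (v : Fin (j+1) → Fin m × Fin n) (d : ℕ) (s : Fin n),
      X (d+1) v s = X d v s - γ * g (ext v d) (X (k d) v) s := by
    intro v d s
    rw [hX_def, hg_def]
    simp only [asyChi]
    rw [min_eq_left (hk d).2]
    congr 1
    split <;> ring
  -- telescoping
  have htel : ∀ (v : Fin (j+1) → Fin m × Fin n) (s : Fin n),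
      X (k j) v s - X j v s
      = ∑ d ∈ Finset.Ico (k j) j, γ * g (ext v d) (X (k d) v) s := by
    intro v s
    have h1 : ∀ d, X d v s - X (d+1) v s = γ * g (ext v d) (X (k d) v) s := by
      intro d
      rw [hstep v d s]
      ring
    calc X (k j) v s - X j v s
        = ∑ d ∈ Finset.Ico (k j) j, (X d v s - X (d+1) v s) := by
          rw [Finset.sum_Ico_eq_sub _ (hk j).2,
            Finset.sum_range_sub' (fun d => X d v s) j,
            Finset.sum_range_sub' (fun d => X d v s) (k j)]
          ring
      _ = ∑ d ∈ Finset.Ico (k j) j, γ * g (ext v d) (X (k d) v) s :=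
          Finset.sum_congr rfl (fun d _ => h1 d)
  -- reorganize the left sum
  have hFLsum : (∑ v : Fin (j+1) → Fin m × Fin n, W v *
        (∑ s, (X (k j) v s - X j v s) * g (ext v j) (X (k j) v) s))
      = γ * ∑ d ∈ Finset.Ico (k j) j, ∑ v : Fin (j+1) → Fin m × Fin n, W v *
          (∑ s, g (ext v d) (X (k d) v) s * g (ext v j) (X (k j) v) s) := by
    have perv : ∀ v : Fin (j+1) → Fin m × Fin n,
        W v * (∑ s, (X (k j) v s - X j v s) * g (ext v j) (X (k j) v) s)
        = ∑ d ∈ Finset.Ico (k j) j, γ * (W v *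
            ∑ s, g (ext v d) (X (k d) v) s * g (ext v j) (X (k j) v) s) := by
      intro v
      calc W v * (∑ s, (X (k j) v s - X j v s) * g (ext v j) (X (k j) v) s)
          = W v * ∑ s, ∑ d ∈ Finset.Ico (k j) j,
              γ * g (ext v d) (X (k d) v) s * g (ext v j) (X (k j) v) s := by
            congr 1
            apply Finset.sum_congr rfl
            intro s _
            rw [htel v s, Finset.sum_mul]
        _ = W v * ∑ d ∈ Finset.Ico (k j) j, ∑ s,
              γ * g (ext v d) (X (k d) v) s * g (ext v j) (X (k j) v) s := by
            rw [Finset.sum_comm]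
        _ = ∑ d ∈ Finset.Ico (k j) j, γ * (W v *
              ∑ s, g (ext v d) (X (k d) v) s * g (ext v j) (X (k j) v) s) := by
            rw [Finset.mul_sum]
            apply Finset.sum_congr rfl
            intro d _
            rw [Finset.mul_sum, Finset.mul_sum]
            rw [Finset.mul_sum]
            apply Finset.sum_congr rfl
            intro s _
            ring
    rw [Finset.sum_congr rfl (fun v _ => perv v)]
    rw [Finset.sum_comm]
    rw [Finset.mul_sum]
    apply Finset.sum_congr rfl
    intro d _
    rw [Finset.mul_sum]
  rw [hFLsum]
  -- the two conditional-expectation (peeling) steps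
  have hSd : ∀ d, d ∈ Finset.Ico (k j) j →
      (∑ v : Fin (j+1) → Fin m × Fin n, W v *
        (∑ s, g (ext v d) (X (k d) v) s * g (ext v j) (X (k j) v) s))
      = ∑ v : Fin (j+1) → Fin m × Fin n, W v *
        (∑ s, hh (X (k d) v) s * hh (X (k j) v) s) := by
    intro d hd
    obtain ⟨hd1, hd2⟩ := Finset.mem_Ico.mp hd
    have hdj : d < j + 1 := by omega
    have hjj : j < j + 1 := by omega
    have hextvj : ∀ v : Fin (j+1) → Fin m × Fin n, ext v j = v ⟨j, hjj⟩ := by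
      intro v
      rw [hext_def]
      simp only
      rw [dif_pos hjj]
    have hextvd : ∀ v : Fin (j+1) → Fin m × Fin n, ext v d = v ⟨d, hdj⟩ := by
      intro v
      rw [hext_def]
      simp only
      rw [dif_pos hdj]
    have hcdj : (⟨d, hdj⟩ : Fin (j+1)) ≠ ⟨j, hjj⟩ := by
      intro hc
      have := congrArg Fin.val hc
      simp at this
      omega
    have hL1 : ∀ (y : Fin n → ℝ) (s : Fin n), (∑ p, w p * g p y s) = hh y s := by
      intro y s
      rw [hw_def, hg_def, hh_def]
      exact aux_L1 A b θ hθ y s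
    have swap1 : ∀ (G : Fin n → ℝ) (y : Fin n → ℝ),
        (∑ p, w p * ∑ s, G s * g p y s) = ∑ s, G s * hh y s := by
      intro G y
      calc ∑ p, w p * ∑ s, G s * g p y s
          = ∑ p, ∑ s, G s * (w p * g p y s) := by
            apply Finset.sum_congr rfl
            intro p _
            rw [Finset.mul_sum]
            apply Finset.sum_congr rfl
            intro s _
            ring
        _ = ∑ s, ∑ p, G s * (w p * g p y s) := Finset.sum_comm
        _ = ∑ s, G s * ∑ p, w p * g p y s := by
            apply Finset.sum_congr rfl
            intro s _
            rw [Finset.mul_sum]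
        _ = ∑ s, G s * hh y s := by
            apply Finset.sum_congr rfl
            intro s _
            rw [hL1 y s]
    have swap2 : ∀ (y z : Fin n → ℝ),
        (∑ p, w p * ∑ s, g p y s * hh z s) = ∑ s, hh y s * hh z s := by
      intro y z
      calc ∑ p, w p * ∑ s, g p y s * hh z s
          = ∑ p, ∑ s, hh z s * (w p * g p y s) := by
            apply Finset.sum_congr rfl
            intro p _
            rw [Finset.mul_sum]
            apply Finset.sum_congr rfl
            intro s _
            ring
        _ = ∑ s, ∑ p, hh z s * (w p * g p y s) := Finset.sum_comm
        _ = ∑ s, hh z s * ∑ p, w p * g p y s := by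
            apply Finset.sum_congr rfl
            intro s _
            rw [Finset.mul_sum]
        _ = ∑ s, hh y s * hh z s := by
            apply Finset.sum_congr rfl
            intro s _
            rw [hL1 y s]
            ring
    calc (∑ v : Fin (j+1) → Fin m × Fin n, W v *
          (∑ s, g (ext v d) (X (k d) v) s * g (ext v j) (X (k j) v) s))
        = ∑ v : Fin (j+1) → Fin m × Fin n, (∏ i, w (v i)) *
            (∑ s, g (v ⟨d, hdj⟩) (X (k d) v) s * g (v ⟨j, hjj⟩) (X (k j) v) s) := by
          apply Finset.sum_congr rfl
          intro v _
          rw [hextvj v, hextvd v, hW_def]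
      _ = ∑ v : Fin (j+1) → Fin m × Fin n, (∏ i, w (v i)) *
            ∑ p, w p * ∑ s, g (v ⟨d, hdj⟩) (X (k d) v) s * g p (X (k j) v) s := by
          exact aux_peel w hw1 (⟨j, hjj⟩ : Fin (j+1))
            (fun p v => ∑ s, g (v ⟨d, hdj⟩) (X (k d) v) s * g p (X (k j) v) s)
            (fun p v q => by
              rw [hXupd ⟨j, hjj⟩ v q (k d) (le_trans (hk d).2 (le_of_lt hd2)),
                hXupd ⟨j, hjj⟩ v q (k j) ((hk j).2),
                Function.update_of_ne hcdj])
      _ = ∑ v : Fin (j+1) → Fin m × Fin n, (∏ i, w (v i)) *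
            ∑ s, g (v ⟨d, hdj⟩) (X (k d) v) s * hh (X (k j) v) s := by
          apply Finset.sum_congr rfl
          intro v _
          rw [swap1 (fun s => g (v ⟨d, hdj⟩) (X (k d) v) s) (X (k j) v)]
      _ = ∑ v : Fin (j+1) → Fin m × Fin n, (∏ i, w (v i)) *
            ∑ p, w p * ∑ s, g p (X (k d) v) s * hh (X (k j) v) s := by
          exact aux_peel w hw1 (⟨d, hdj⟩ : Fin (j+1))
            (fun p v => ∑ s, g p (X (k d) v) s * hh (X (k j) v) s)
            (fun p v q => by
              rw [hXupd ⟨d, hdj⟩ v q (k d) ((hk d).2),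
                hXupd ⟨d, hdj⟩ v q (k j) hd1])
      _ = ∑ v : Fin (j+1) → Fin m × Fin n, W v *
            (∑ s, hh (X (k d) v) s * hh (X (k j) v) s) := by
          apply Finset.sum_congr rfl
          intro v _
          rw [swap2 (X (k d) v) (X (k j) v), hW_def]
  -- pointwise bound and conclusion
  have hbound : ∀ d, d ∈ Finset.Ico (k j) j →
      (∑ v : Fin (j+1) → Fin m × Fin n, W v *
        (∑ s, hh (X (k d) v) s * hh (X (k j) v) s))
      ≤ lammax / (2 * (m : ℝ) ^ 2) *
          ((∑ v : Fin (j+1) → Fin m × Fin n, W v * Rf (k d) v)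
            + (∑ v : Fin (j+1) → Fin m × Fin n, W v * Rf (k j) v)) := by
    intro d _
    have hpt : ∀ v : Fin (j+1) → Fin m × Fin n,
        (∑ s, hh (X (k d) v) s * hh (X (k j) v) s)
        ≤ lammax / (2 * (m : ℝ) ^ 2) * (Rf (k d) v + Rf (k j) v) := by
      intro v
      rw [hh_def, hRf_def]
      exact aux_h_bound hm A b lammax hlammax (X (k d) v) (X (k j) v)
    calc (∑ v : Fin (j+1) → Fin m × Fin n, W v *
          (∑ s, hh (X (k d) v) s * hh (X (k j) v) s))
        ≤ ∑ v : Fin (j+1) → Fin m × Fin n, W v *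
            (lammax / (2 * (m : ℝ) ^ 2) * (Rf (k d) v + Rf (k j) v)) :=
          Finset.sum_le_sum (fun v _ => mul_le_mul_of_nonneg_left (hpt v) (hWnn v))
      _ = lammax / (2 * (m : ℝ) ^ 2) *
          ((∑ v : Fin (j+1) → Fin m × Fin n, W v * Rf (k d) v)
            + (∑ v : Fin (j+1) → Fin m × Fin n, W v * Rf (k j) v)) := by
          conv_rhs => rw [mul_add, Finset.mul_sum, Finset.mul_sum]
          rw [← Finset.sum_add_distrib]
          apply Finset.sum_congr rfl
          intro v _
          ring
  have hsum_le : ∑ d ∈ Finset.Ico (k j) j,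
        (∑ v : Fin (j+1) → Fin m × Fin n, W v *
          (∑ s, g (ext v d) (X (k d) v) s * g (ext v j) (X (k j) v) s))
      ≤ ∑ d ∈ Finset.Ico (k j) j, lammax / (2 * (m : ℝ) ^ 2) *
          ((∑ v : Fin (j+1) → Fin m × Fin n, W v * Rf (k d) v)
            + (∑ v : Fin (j+1) → Fin m × Fin n, W v * Rf (k j) v)) :=
    Finset.sum_le_sum (fun d hd => by
      rw [hSd d hd]
      exact hbound d hd)
  calc γ * ∑ d ∈ Finset.Ico (k j) j,
        (∑ v : Fin (j+1) → Fin m × Fin n, W v *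
          (∑ s, g (ext v d) (X (k d) v) s * g (ext v j) (X (k j) v) s))
      ≤ γ * ∑ d ∈ Finset.Ico (k j) j, lammax / (2 * (m : ℝ) ^ 2) *
          ((∑ v : Fin (j+1) → Fin m × Fin n, W v * Rf (k d) v)
            + (∑ v : Fin (j+1) → Fin m × Fin n, W v * Rf (k j) v)) :=
        mul_le_mul_of_nonneg_left hsum_le (le_of_lt hγ)
    _ = γ * lammax / (2 * (m : ℝ) ^ 2) * ∑ d ∈ Finset.Ico (k j) j,
          ((∑ v : Fin (j+1) → Fin m × Fin n, W v * Rf (k d) v)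
            + (∑ v : Fin (j+1) → Fin m × Fin n, W v * Rf (k j) v)) := by
        rw [Finset.mul_sum, Finset.mul_sum]
        apply Finset.sum_congr rfl
        intro d _
        ring
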